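/- In a degenerate Euclidean TSP instance (all points lie on a common line), every 2-optimal tour is an optimal tour. -/

import Mathlib

open Classical

/-- The `p`-norm distance between two points of `ℝ²`. For `p = 2` this is the
Euclidean distance. -/
noncomputable def pdist (p : ℝ) (a b : ℝ × ℝ) : ℝ :=
  (|a.1 - b.1| ^ p + |a.2 - b.2| ^ p) ^ (1 / p)

/-- The length of the closed polygon (cyclic sequence) given by the list `L`. -/
noncomputable def cycleLength (p : ℝ) (L : List (ℝ × ℝ)) : ℝ :=
  ((L.zip (L.rotate 1)).map fun e => pdist p e.1 e.2).sum

/-- `L` is a tour (Hamiltonian cycle) of the finite point set `V`. -/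
def IsTour (V : Finset (ℝ × ℝ)) (L : List (ℝ × ℝ)) : Prop :=
  L.Nodup ∧ L.toFinset = V

/-- The (oriented) tour `L` is 2-optimal: for any two distinct directed edges
`(a,b)` and `(x,y)` of the tour, `c(a,x) + c(b,y) ≥ c(a,b) + c(x,y)`. -/
def IsTwoOptimal (p : ℝ) (L : List (ℝ × ℝ)) : Prop :=
  ∀ e ∈ L.zip (L.rotate 1), ∀ f ∈ L.zip (L.rotate 1), e ≠ f →
    pdist p e.1 e.2 + pdist p f.1 f.2 ≤ pdist p e.1 f.1 + pdist p e.2 f.2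

/-- `L` is an optimal (shortest) tour for `V`. -/
def IsOptimalTour (p : ℝ) (V : Finset (ℝ × ℝ)) (L : List (ℝ × ℝ)) : Prop :=
  IsTour V L ∧ ∀ L' : List (ℝ × ℝ), IsTour V L' → cycleLength p L ≤ cycleLength p L'

/-! ### Auxiliary list lemmas -/

section lists
variable {α β : Type*}

lemma TwoOptAux.zip_rot1 : ∀ (A B : List α) (_ : A.length = B.length),
    (A.rotate 1).zip (B.rotate 1) = (A.zip B).rotate 1
  | [], [], _ => by simp
  | a :: A', b :: B', h => by
    have h' : A'.length = B'.length := by simpa using h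
    have r1 : (a :: A').rotate 1 = A' ++ [a] := by
      simpa using List.rotate_cons_succ A' a 0
    have r2 : (b :: B').rotate 1 = B' ++ [b] := by
      simpa using List.rotate_cons_succ B' b 0
    have r3 : ((a :: A').zip (b :: B')).rotate 1 = (A'.zip B') ++ [(a, b)] := by
      simpa using List.rotate_cons_succ (A'.zip B') (a, b) 0
    rw [r1, r2, r3, List.zip_append h']
    simp

lemma TwoOptAux.zip_rot (A B : List α) (h : A.length = B.length) (k : ℕ) :
    (A.rotate k).zip (B.rotate k) = (A.zip B).rotate k := by
  induction k with
  | zero => simp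
  | succ k ih =>
    have h1 : A.rotate (k + 1) = (A.rotate k).rotate 1 := by rw [List.rotate_rotate]
    have h2 : B.rotate (k + 1) = (B.rotate k).rotate 1 := by rw [List.rotate_rotate]
    rw [h1, h2, TwoOptAux.zip_rot1 _ _ (by simp [h]), ih, List.rotate_rotate]

lemma TwoOptAux.edges_rot (L : List α) (k : ℕ) :
    (L.rotate k).zip ((L.rotate k).rotate 1) = (L.zip (L.rotate 1)).rotate k := by
  have : (L.rotate k).rotate 1 = (L.rotate 1).rotate k := by
    rw [List.rotate_rotate, List.rotate_rotate, Nat.add_comm]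
  rw [this, ← TwoOptAux.zip_rot L (L.rotate 1) (by simp) k]

lemma TwoOptAux.zip_trunc : ∀ (A C B : List α) (_ : C.length ≤ A.length),
    (A ++ B).zip C = A.zip C
  | _, [], _, _ => by simp
  | [], c :: C', _, h => by simp at h
  | a :: A', c :: C', B, h => by
    have h' : C'.length ≤ A'.length := by simpa using h
    simpa [List.zip] using TwoOptAux.zip_trunc A' C' B h'

end lists

/-! ### Path sums -/

section path
variable {α : Type*} (g : α → ℝ)

noncomputable def TwoOptAux.pathSum (W : List α) : ℝ :=
  ((W.zip W.tail).map fun e => |g e.2 - g e.1|).sum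

namespace TwoOptAux

lemma pathSum_single (a : α) : pathSum g [a] = 0 := by simp [pathSum]

lemma pathSum_cons (a b : α) (t : List α) :
    pathSum g (a :: b :: t) = |g b - g a| + pathSum g (b :: t) := by
  simp [pathSum, List.zip]

lemma pathSum_nonneg : ∀ W : List α, 0 ≤ pathSum g W := by
  intro W
  refine List.sum_nonneg ?_
  intro x hx
  simp only [List.mem_map] at hx
  obtain ⟨e, _, rfl⟩ := hx
  exact abs_nonneg _

lemma pathSum_ge : ∀ (W : List α) (a b : α), W.head? = some a → W.getLast? = some b →
    |g b - g a| ≤ pathSum g W := by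
  intro W
  induction W with
  | nil => intro a b ha _; simp at ha
  | cons x W' ih =>
    intro a b ha hb
    have hax : a = x := by simpa using ha.symm
    subst hax
    cases W' with
    | nil =>
      have : b = a := by simpa using hb.symm
      subst this
      simp [pathSum_single]
    | cons y t =>
      have hb' : (y :: t).getLast? = some b := by
        rwa [List.getLast?_cons_cons] at hb
      have h1 := ih y b rfl hb'
      have h2 : |g b - g a| ≤ |g y - g a| + |g b - g y| := by
        linarith [abs_sub_le (g b) (g y) (g a), abs_sub_comm (g b) (g y), abs_sub_comm (g y) (g b)]
      rw [pathSum_cons]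
      linarith

lemma pathSum_split (m : α) (Y : List α) : ∀ X : List α,
    pathSum g (X ++ m :: Y) = pathSum g (X ++ [m]) + pathSum g (m :: Y) := by
  intro X
  induction X with
  | nil => simp [pathSum_single]
  | cons x X' ih =>
    cases X' with
    | nil => simp [pathSum_cons, pathSum_single]
    | cons c r =>
      have e1 : (x :: c :: r) ++ m :: Y = x :: c :: (r ++ m :: Y) := by simp
      have e2 : (x :: c :: r) ++ [m] = x :: c :: (r ++ [m]) := by simp
      rw [e1, e2, pathSum_cons]
      have e3 : c :: (r ++ m :: Y) = (c :: r) ++ m :: Y := by simp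
      have e4 : c :: (r ++ [m]) = (c :: r) ++ [m] := by simp
      rw [e3, e4, ih]
      have e6 : x :: (c :: r ++ [m]) = x :: c :: (r ++ [m]) := by simp
      rw [e6, pathSum_cons, e4]
      ring

lemma edges_eq_path (a : α) (t : List α) :
    ((a :: t).zip ((a :: t).rotate 1)) = ((a :: t) ++ [a]).zip (((a :: t) ++ [a]).tail) := by
  have r1 : (a :: t).rotate 1 = t ++ [a] := by simpa using List.rotate_cons_succ t a 0
  rw [r1]
  have h2 : ((a :: t) ++ [a]).tail = t ++ [a] := by simp
  rw [h2]
  exact (zip_trunc (a :: t) (t ++ [a]) [a] (by simp)).symm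

end TwoOptAux
end path

/-! ### Cyclic sums of coordinate differences -/

section cyc
variable {α : Type*} (g : α → ℝ)

noncomputable def TwoOptAux.cycSum (L : List α) : ℝ :=
  ((L.zip (L.rotate 1)).map fun e => |g e.2 - g e.1|).sum

namespace TwoOptAux

lemma cycSum_rotate (L : List α) (k : ℕ) : cycSum g (L.rotate k) = cycSum g L := by
  unfold cycSum
  rw [edges_rot]
  exact (((L.zip (L.rotate 1)).rotate_perm k).map _).sum_eq

lemma cycSum_nonneg (L : List α) : 0 ≤ cycSum g L := by
  refine List.sum_nonneg ?_
  intro x hx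
  simp only [List.mem_map] at hx
  obtain ⟨e, _, rfl⟩ := hx
  exact abs_nonneg _

lemma cycSum_eq_pathSum (a : α) (t : List α) :
    cycSum g (a :: t) = pathSum g ((a :: t) ++ [a]) := by
  unfold cycSum pathSum
  rw [edges_eq_path]

lemma cycSum_lower (L : List α) (vmin vmax : α) (h1 : vmin ∈ L) (h2 : vmax ∈ L) :
    2 * (g vmax - g vmin) ≤ cycSum g L := by
  obtain ⟨l₁, l₂, rfl⟩ := List.append_of_mem h1
  have hrot : (l₁ ++ vmin :: l₂).rotate l₁.length = vmin :: (l₂ ++ l₁) := by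
    rw [List.rotate_eq_drop_append_take (by simp), List.drop_left, List.take_left]
    simp
  rw [← cycSum_rotate g _ l₁.length, hrot]
  have h2' : vmax ∈ vmin :: (l₂ ++ l₁) := by
    rw [← hrot, List.mem_rotate]
    exact h2
  obtain ⟨K₁, K₂, hK⟩ := List.append_of_mem h2'
  rw [hK]
  cases K₁ with
  | nil =>
    have hv : vmin = vmax := by simpa using congrArg List.head? hK
    have h0 : (2:ℝ) * (g vmax - g vmin) = 0 := by rw [hv]; ring
    rw [h0]
    simpa using cycSum_nonneg g (vmax :: K₂)
  | cons c K₁' =>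
    have hc : c = vmin := by simpa using (congrArg List.head? hK).symm
    subst hc
    rw [List.cons_append, cycSum_eq_pathSum]
    have e1 : (c :: (K₁' ++ vmax :: K₂)) ++ [c] = (c :: K₁') ++ vmax :: (K₂ ++ [c]) := by simp
    rw [e1, pathSum_split]
    have b1 : |g vmax - g c| ≤ pathSum g ((c :: K₁') ++ [vmax]) :=
      pathSum_ge g _ c vmax (by simp) (by exact List.getLast?_concat)
    have b2 : |g c - g vmax| ≤ pathSum g (vmax :: (K₂ ++ [c])) := by
      refine pathSum_ge g _ vmax c (by simp) ?_
      rw [show vmax :: (K₂ ++ [c]) = (vmax :: K₂) ++ [c] by simp]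
      exact List.getLast?_concat
    linarith [le_abs_self (g vmax - g c), abs_sub_comm (g c) (g vmax)]

end TwoOptAux
end cyc

/-! ### Arithmetic and measure lemmas -/

namespace TwoOptAux

lemma key_arith {a b x y c : ℝ} (h1 : a ≤ c) (h2 : c < b) (h3 : x ≤ c) (h4 : c < y)
    (h : |b - a| + |y - x| ≤ |x - a| + |y - b|) : False := by
  rw [abs_of_pos (by linarith), abs_of_pos (by linarith)] at h
  rcases abs_cases (x - a) with ⟨e1, _⟩ | ⟨e1, _⟩ <;>
    rcases abs_cases (y - b) with ⟨e2, _⟩ | ⟨e2, _⟩ <;> rw [e1, e2] at h <;> linarith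

lemma abs_eq_posparts (x : ℝ) : |x| = max x 0 + max (-x) 0 := by
  rcases le_total 0 x with h | h
  · rw [abs_of_nonneg h, max_eq_left h, max_eq_right (by linarith)]; ring
  · rw [abs_of_nonpos h, max_eq_right h, max_eq_left (by linarith)]; ring

open MeasureTheory in
lemma disjoint_sum_le {β : Type*} (F : Finset β) (a b : β → ℝ) (m M : ℝ)
    (hm : ∀ e ∈ F, m ≤ a e) (hM : ∀ e ∈ F, b e ≤ M)
    (hdisj : (F : Set β).PairwiseDisjoint fun e => Set.Ico (a e) (b e)) :
    (∑ e ∈ F, max (b e - a e) 0) ≤ max (M - m) 0 := by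
  have h1 : ∑ e ∈ F, volume (Set.Ico (a e) (b e)) = volume (⋃ e ∈ F, Set.Ico (a e) (b e)) :=
    (measure_biUnion_finset hdisj fun e _ => measurableSet_Ico).symm
  have h2 : volume (⋃ e ∈ F, Set.Ico (a e) (b e)) ≤ volume (Set.Ico m M) := by
    refine measure_mono (Set.iUnion₂_subset fun e he => Set.Ico_subset_Ico (hm e he) (hM e he))
  rw [← h1] at h2
  have h3 : (∑ e ∈ F, volume (Set.Ico (a e) (b e))).toReal ≤ (volume (Set.Ico m M)).toReal := by
    refine ENNReal.toReal_mono ?_ h2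
    rw [Real.volume_Ico]
    exact ENNReal.ofReal_ne_top
  rw [ENNReal.toReal_sum (fun e _ => by rw [Real.volume_Ico]; exact ENNReal.ofReal_ne_top)] at h3
  simp only [Real.volume_Ico, ENNReal.toReal_ofReal'] at h3
  exact h3

lemma pdist_line (d p₀ : ℝ × ℝ) (s t : ℝ) :
    pdist 2 (s • d + p₀) (t • d + p₀) = |s - t| * Real.sqrt (d.1 ^ 2 + d.2 ^ 2) := by
  unfold pdist
  have h1 : (s • d + p₀).1 - (t • d + p₀).1 = (s - t) * d.1 := by
    simp [Prod.smul_def]; ring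
  have h2 : (s • d + p₀).2 - (t • d + p₀).2 = (s - t) * d.2 := by
    simp [Prod.smul_def]; ring
  rw [h1, h2]
  rw [show (2:ℝ) = ((2:ℕ):ℝ) by norm_num, Real.rpow_natCast, Real.rpow_natCast]
  rw [sq_abs, sq_abs]
  rw [show ((s - t) * d.1) ^ 2 + ((s - t) * d.2) ^ 2 = (s - t) ^ 2 * (d.1 ^ 2 + d.2 ^ 2) by ring]
  rw [show (1 / ((2:ℕ):ℝ)) = (1/2 : ℝ) by norm_num]
  rw [← Real.sqrt_eq_rpow]
  rw [Real.sqrt_mul (sq_nonneg _), Real.sqrt_sq_eq_abs]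

end TwoOptAux

open TwoOptAux

/-- In a degenerate Euclidean TSP instance (all points of `V` lie on a common
line), every 2-optimal tour is an optimal tour. -/
theorem two_opt_degenerate_optimal (V : Finset (ℝ × ℝ))
    (hdeg : Collinear ℝ (V : Set (ℝ × ℝ)))
    (L : List (ℝ × ℝ)) (hL : IsTour V L) (h2 : IsTwoOptimal 2 L) :
    IsOptimalTour 2 V L := by
  refine ⟨hL, ?_⟩
  intro L' hL'
  by_cases hcard : V.card ≤ 1
  · -- degenerate small case: `L' = L`
    have hperm : List.Perm L' L :=
      List.perm_of_nodup_nodup_toFinset_eq hL'.1 hL.1 (hL'.2.trans hL.2.symm)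
    have hlen : L.length ≤ 1 := by
      rw [← List.toFinset_card_of_nodup hL.1, hL.2]; exact hcard
    have : L' = L := by
      cases L with
      | nil => exact hperm.eq_nil
      | cons a t =>
        cases t with
        | nil => exact List.perm_singleton.mp hperm
        | cons b t' => simp at hlen
    rw [this]
  · push_neg at hcard
    -- set up the line coordinates
    have hVne : V.Nonempty := Finset.card_pos.mp (by omega)
    obtain ⟨p₀, hp₀⟩ := id hVne
    rw [collinear_iff_of_mem (by exact hp₀ : (p₀ : ℝ × ℝ) ∈ (V : Set (ℝ × ℝ)))] at hdeg
    obtain ⟨d, hd⟩ := hdeg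
    have hd' : ∀ v ∈ V, ∃ c : ℝ, v = c • d + p₀ := by
      intro v hv
      obtain ⟨c, hc⟩ := hd v hv
      exact ⟨c, hc⟩
    obtain ⟨p₁, hp₁V, hp₁ne⟩ := Finset.exists_mem_ne hcard p₀
    have hdne : d ≠ 0 := by
      rintro rfl
      obtain ⟨c, hc⟩ := hd' p₁ hp₁V
      simp at hc
      exact hp₁ne hc
    set g : ℝ × ℝ → ℝ := fun v => if h : ∃ c : ℝ, v = c • d + p₀ then h.choose else 0 with hgdef
    have hg : ∀ v ∈ V, v = g v • d + p₀ := by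
      intro v hv
      have h : ∃ c : ℝ, v = c • d + p₀ := hd' v hv
      simp only [hgdef, dif_pos h]
      exact h.choose_spec
    set n : ℝ := Real.sqrt (d.1 ^ 2 + d.2 ^ 2) with hndef
    have hn : 0 < n := by
      rw [hndef]
      refine Real.sqrt_pos.mpr ?_
      have hne : d.1 ≠ 0 ∨ d.2 ≠ 0 := by
        by_contra h
        push_neg at h
        exact hdne (Prod.ext h.1 h.2)
      rcases hne with h | h
      · positivity
      · positivity
    have hpd : ∀ u ∈ V, ∀ v ∈ V, pdist 2 u v = |g u - g v| * n := by
      intro u hu v hv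
      calc pdist 2 u v = pdist 2 (g u • d + p₀) (g v • d + p₀) := by
            rw [← hg u hu, ← hg v hv]
        _ = |g u - g v| * n := pdist_line d p₀ (g u) (g v)
    -- conversion of cycle lengths
    have hconv : ∀ K : List (ℝ × ℝ), (∀ x ∈ K, x ∈ V) → cycleLength 2 K = cycSum g K * n := by
      intro K hK
      unfold cycleLength cycSum
      rw [← List.sum_map_mul_right]
      refine congrArg List.sum (List.map_congr_left ?_)
      intro e he
      have h1 : e.1 ∈ K := (List.of_mem_zip he).1
      have h2' : e.2 ∈ K := List.mem_rotate.mp (List.of_mem_zip he).2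
      rw [hpd e.1 (hK _ h1) e.2 (hK _ h2'), abs_sub_comm]
    -- extremal points
    obtain ⟨vmin, hvminV, hvmin⟩ := Finset.exists_mem_eq_inf' hVne g
    obtain ⟨vmax, hvmaxV, hvmax⟩ := Finset.exists_mem_eq_sup' hVne g
    set m : ℝ := V.inf' hVne g
    set M : ℝ := V.sup' hVne g
    have hmg : ∀ v ∈ V, m ≤ g v := fun v hv => Finset.inf'_le g hv
    have hMg : ∀ v ∈ V, g v ≤ M := fun v hv => Finset.le_sup' g hv
    have hmM : m ≤ M := le_trans (hmg vmax hvmaxV) (le_of_eq hvmax.symm)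
    have hmemL : ∀ x ∈ L, x ∈ V := fun x hx => hL.2 ▸ List.mem_toFinset.mpr hx
    have hmemL' : ∀ x ∈ L', x ∈ V := fun x hx => hL'.2 ▸ List.mem_toFinset.mpr hx
    -- upper bound for the 2-optimal tour
    have hupper : cycSum g L ≤ 2 * (M - m) := by
      set E : List ((ℝ × ℝ) × (ℝ × ℝ)) := L.zip (L.rotate 1) with hEdef
      have hEnd : E.Nodup := by
        have h1 : E.map Prod.fst = L := List.map_fst_zip (l₁ := L) (l₂ := L.rotate 1) (by simp)
        exact List.Nodup.of_map Prod.fst (h1 ▸ hL.1)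
      have hEmem : ∀ e ∈ E, e.1 ∈ V ∧ e.2 ∈ V := by
        intro e he
        exact ⟨hmemL _ (List.of_mem_zip he).1, hmemL _ (List.mem_rotate.mp (List.of_mem_zip he).2)⟩
      have habs2 : ∀ e ∈ E, ∀ e' ∈ E, e ≠ e' →
          |g e.2 - g e.1| + |g e'.2 - g e'.1| ≤ |g e'.1 - g e.1| + |g e'.2 - g e.2| := by
        intro e he e' he' hne
        have h := h2 e he e' he' hne
        rw [hpd e.1 (hEmem e he).1 e.2 (hEmem e he).2,
            hpd e'.1 (hEmem e' he').1 e'.2 (hEmem e' he').2,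
            hpd e.1 (hEmem e he).1 e'.1 (hEmem e' he').1,
            hpd e.2 (hEmem e he).2 e'.2 (hEmem e' he').2, ← add_mul, ← add_mul] at h
        have h' := le_of_mul_le_mul_right h hn
        linarith [abs_sub_comm (g e.1) (g e.2), abs_sub_comm (g e'.1) (g e'.2),
          abs_sub_comm (g e.1) (g e'.1), abs_sub_comm (g e.2) (g e'.2)]
      have hdisj1 : (E.toFinset : Set ((ℝ × ℝ) × (ℝ × ℝ))).PairwiseDisjoint
          (fun e => Set.Ico (g e.1) (g e.2)) := by
        intro e he e' he' hne
        have heE : e ∈ E := List.mem_toFinset.mp he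
        have he'E : e' ∈ E := List.mem_toFinset.mp he'
        simp only [Function.onFun]
        refine Set.disjoint_left.mpr fun c hc hc' => ?_
        exact key_arith hc.1 hc.2 hc'.1 hc'.2 (habs2 e heE e' he'E hne)
      have hdisj2 : (E.toFinset : Set ((ℝ × ℝ) × (ℝ × ℝ))).PairwiseDisjoint
          (fun e => Set.Ico (g e.2) (g e.1)) := by
        intro e he e' he' hne
        have heE : e ∈ E := List.mem_toFinset.mp he
        have he'E : e' ∈ E := List.mem_toFinset.mp he'
        simp only [Function.onFun]
        refine Set.disjoint_left.mpr fun c hc hc' => ?_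
        have h := habs2 e heE e' he'E hne
        refine key_arith (a := g e.2) (b := g e.1) (x := g e'.2) (y := g e'.1)
          hc.1 hc.2 hc'.1 hc'.2 ?_
        linarith [abs_sub_comm (g e.2) (g e.1), abs_sub_comm (g e'.2) (g e'.1),
          abs_sub_comm (g e'.1) (g e.1), abs_sub_comm (g e'.2) (g e.2)]
      have hb1 : ∀ e ∈ E.toFinset, m ≤ g e.1 := fun e he =>
        hmg _ (hEmem e (List.mem_toFinset.mp he)).1
      have hb2 : ∀ e ∈ E.toFinset, g e.2 ≤ M := fun e he =>
        hMg _ (hEmem e (List.mem_toFinset.mp he)).2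
      have hb3 : ∀ e ∈ E.toFinset, m ≤ g e.2 := fun e he =>
        hmg _ (hEmem e (List.mem_toFinset.mp he)).2
      have hb4 : ∀ e ∈ E.toFinset, g e.1 ≤ M := fun e he =>
        hMg _ (hEmem e (List.mem_toFinset.mp he)).1
      have hs1 := disjoint_sum_le E.toFinset (fun e => g e.1) (fun e => g e.2) m M hb1 hb2 hdisj1
      have hs2 := disjoint_sum_le E.toFinset (fun e => g e.2) (fun e => g e.1) m M hb3 hb4 hdisj2
      rw [max_eq_left (by linarith)] at hs1 hs2
      have hcyc : cycSum g L = ∑ e ∈ E.toFinset, |g e.2 - g e.1| := by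
        rw [List.sum_toFinset _ hEnd]
        rfl
      rw [hcyc]
      have hsplit : ∑ e ∈ E.toFinset, |g e.2 - g e.1|
          = (∑ e ∈ E.toFinset, max (g e.2 - g e.1) 0)
            + ∑ e ∈ E.toFinset, max (g e.1 - g e.2) 0 := by
        rw [← Finset.sum_add_distrib]
        refine Finset.sum_congr rfl fun e _ => ?_
        rw [abs_eq_posparts]
        congr 1
        rw [neg_sub]
      rw [hsplit]
      linarith
    -- conclusion
    have hlow : 2 * (M - m) ≤ cycSum g L' := by
      have h1 : vmin ∈ L' := by
        rw [← List.mem_toFinset, hL'.2]; exact hvminV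
      have h2' : vmax ∈ L' := by
        rw [← List.mem_toFinset, hL'.2]; exact hvmaxV
      have := cycSum_lower g L' vmin vmax h1 h2'
      rw [← hvmin, ← hvmax] at this
      exact this
    rw [hconv L hmemL, hconv L' hmemL']
    have := mul_le_mul_of_nonneg_right hupper hn.le
    have := mul_le_mul_of_nonneg_right hlow hn.le
    linarith
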